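/- Let P be a bounded graded poset. If P is bowtie free, then P is a lattice. -/

import Mathlib

/-- **A bounded graded bowtie-free poset is a lattice.**
Let `P` be a bounded poset (with greatest and least elements) that is graded (carries a rank
function that is strictly monotone and increases by one along covering relations).  If `P` is
bowtie free — for any four mutually distinct elements `x1, x2, y1, y2` with `x_i < y_j` for all
`i, j ∈ {1,2}` there exists `z` with `x_i ≤ z ≤ y_j` for all `i, j` — then `P` is a lattice:
every pair of elements has a join and a meet. -/
theorem bounded_graded_bowtie_free_is_lattice {P : Type*} [PartialOrder P] [BoundedOrder P]
    (hgraded : ∃ rk : P → ℕ, StrictMono rk ∧ ∀ a b : P, a ⋖ b → rk b = rk a + 1)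
    (hbowtie : ∀ x1 x2 y1 y2 : P,
      x1 ≠ x2 → x1 ≠ y1 → x1 ≠ y2 → x2 ≠ y1 → x2 ≠ y2 → y1 ≠ y2 →
      x1 < y1 → x1 < y2 → x2 < y1 → x2 < y2 →
      ∃ z : P, x1 ≤ z ∧ x2 ≤ z ∧ z ≤ y1 ∧ z ≤ y2) :
    ∀ a b : P, (∃ j : P, IsLUB {a, b} j) ∧ (∃ m : P, IsGLB {a, b} m) := by
  obtain ⟨rk, hmono, -⟩ := hgraded
  intro a b
  by_cases hab : a ≤ b
  · refine ⟨⟨b, ?_⟩, ⟨a, ?_⟩⟩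
    · constructor
      · rintro x (rfl | rfl) <;> simp [hab]
      · intro x hx; exact hx (by simp)
    · constructor
      · rintro x (rfl | rfl) <;> simp [hab]
      · intro x hx; exact hx (by simp)
  by_cases hba : b ≤ a
  · refine ⟨⟨a, ?_⟩, ⟨b, ?_⟩⟩
    · constructor
      · rintro x (rfl | rfl) <;> simp [hba]
      · intro x hx; exact hx (by simp)
    · constructor
      · rintro x (rfl | rfl) <;> simp [hba]
      · intro x hx; exact hx (by simp)
  -- a and b are incomparable
  have hne : a ≠ b := fun h => hab (le_of_eq h)
  have hub : ∀ v ∈ upperBounds {a, b}, a < v ∧ b < v ∧ a ≠ v ∧ b ≠ v := by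
    intro v hv
    have hav : a ≤ v := hv (by simp)
    have hbv : b ≤ v := hv (by simp)
    have h1 : a ≠ v := by rintro rfl; exact hba hbv
    have h2 : b ≠ v := by rintro rfl; exact hab hav
    exact ⟨lt_of_le_of_ne hav h1, lt_of_le_of_ne hbv h2, h1, h2⟩
  have hlb : ∀ v ∈ lowerBounds {a, b}, v < a ∧ v < b ∧ v ≠ a ∧ v ≠ b := by
    intro v hv
    have hav : v ≤ a := hv (by simp)
    have hbv : v ≤ b := hv (by simp)
    have h1 : v ≠ a := by rintro rfl; exact hab hbv
    have h2 : v ≠ b := by rintro rfl; exact hba hav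
    exact ⟨lt_of_le_of_ne hav h1, lt_of_le_of_ne hbv h2, h1, h2⟩
  constructor
  · -- join
    have hsne : (upperBounds ({a, b} : Set P)).Nonempty := ⟨⊤, fun x _ => le_top⟩
    set u := Function.argminOn rk (upperBounds {a, b}) hsne with hu
    have humem : u ∈ upperBounds {a, b} := Function.argminOn_mem _ _ _
    refine ⟨u, humem, ?_⟩
    intro v hv
    by_cases huv : u = v
    · exact le_of_eq huv
    obtain ⟨hau, hbu, hau', hbu'⟩ := hub u humem
    obtain ⟨hav, hbv, hav', hbv'⟩ := hub v hv
    obtain ⟨z, haz, hbz, hzu, hzv⟩ :=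
      hbowtie a b u v hne hau' hav' hbu' hbv' huv hau hav hbu hbv
    have hzmem : z ∈ upperBounds {a, b} := by rintro x (rfl | rfl) <;> assumption
    have hle : rk u ≤ rk z := Function.argminOn_le _ _ hzmem
    have : z = u := by
      rcases lt_or_eq_of_le hzu with h | h
      · exact absurd (hmono h) (not_lt.mpr hle)
      · exact h
    rw [← this]; exact hzv
  · -- meet
    have hsne : (lowerBounds ({a, b} : Set P)).Nonempty := ⟨⊥, fun x _ => bot_le⟩
    set w := Function.argminOn (fun x => rk ⊤ - rk x)
      (lowerBounds {a, b}) hsne with hw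
    have hwmem : w ∈ lowerBounds {a, b} := Function.argminOn_mem _ _ _
    refine ⟨w, hwmem, ?_⟩
    intro v hv
    by_cases hvw : v = w
    · exact le_of_eq hvw
    obtain ⟨hwa, hwb, hwa', hwb'⟩ := hlb w hwmem
    obtain ⟨hva, hvb, hva', hvb'⟩ := hlb v hv
    obtain ⟨z, hvz, hwz, hza, hzb⟩ :=
      hbowtie v w a b hvw hva' hvb' hwa' hwb' hne hva hvb hwa hwb
    have hzmem : z ∈ lowerBounds {a, b} := by rintro x (rfl | rfl) <;> assumption
    have hle := Function.argminOn_le (fun x => rk ⊤ - rk x)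
      (lowerBounds ({a, b} : Set P)) hzmem
    rw [← hw] at hle

    have hztop : rk z ≤ rk ⊤ := hmono.monotone le_top
    have hrk : rk z ≤ rk w := by omega
    have : z = w := by
      rcases lt_or_eq_of_le hwz with h | h
      · exact absurd (hmono h) (not_lt.mpr hrk)
      · exact h.symm
    rw [← this]; exact hvz
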